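/- Let v ∈ ℝ^n satisfy S := Σ_{i=1}^n ln(1+e^{−v_i}) < ln 2. Define α = −ln(e^S − 1) and β = ( Σ_{i=1}^n v_i/(1+e^{v_i}) ) / (1 − e^{−S}). Then 0 < α ≤ β ≤ α + 2 ln n + 1. -/

import Mathlib

open Real Finset

set_option maxHeartbeats 1000000

/-- Weierstrass product inequality. -/
lemma aux_weier {ι : Type*} (s : Finset ι) (b : ι → ℝ)
    (h0 : ∀ i ∈ s, 0 ≤ b i) (h1 : ∀ i ∈ s, b i ≤ 1) :
    1 - ∑ i ∈ s, b i ≤ ∏ i ∈ s, (1 - b i) := by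
  classical
  induction s using Finset.cons_induction with
  | empty => simp
  | cons a s ha ih =>
    rw [Finset.sum_cons, Finset.prod_cons]
    have hba0 : 0 ≤ b a := h0 a (Finset.mem_cons_self a s)
    have hba1 : b a ≤ 1 := h1 a (Finset.mem_cons_self a s)
    have hsum0 : 0 ≤ ∑ i ∈ s, b i :=
      Finset.sum_nonneg fun i hi => h0 i (Finset.mem_cons_of_mem hi)
    have ih' := ih (fun i hi => h0 i (Finset.mem_cons_of_mem hi))
      (fun i hi => h1 i (Finset.mem_cons_of_mem hi))
    nlinarith

lemma aux_log_le {x : ℝ} (hx : 0 < x) : Real.log x ≤ x * Real.exp (-1) := by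
  have h := Real.log_le_sub_one_of_pos (show 0 < x * Real.exp (-1) by positivity)
  rw [Real.log_mul hx.ne' (Real.exp_pos _).ne', Real.log_exp] at h
  linarith

lemma aux_quad {S : ℝ} (hS0 : 0 < S) (hS1 : S ≤ 1) :
    Real.exp (-S) ≤ 1 - S + S^2/2 := by
  have habs : |(-S)| ≤ 1 := by rw [abs_neg, abs_of_pos hS0]; linarith
  have hb4 := Real.exp_bound habs (by norm_num : 0 < 4)
  have hsum4 : ∑ m ∈ Finset.range 4, (-S) ^ m / (Nat.factorial m) =
      1 - S + S^2/2 - S^3/6 := by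
    simp [Finset.sum_range_succ, Nat.factorial]
    ring
  rw [hsum4, abs_neg, abs_of_pos hS0] at hb4
  norm_num [Nat.factorial] at hb4
  have h1 := (abs_sub_le_iff.mp hb4).1
  have h34 : S^4 ≤ S^3 := by
    have := mul_le_mul_of_nonneg_left hS1 (pow_nonneg hS0.le 3)
    calc S^4 = S^3 * S := by ring
      _ ≤ S^3 * 1 := mul_le_mul_of_nonneg_left hS1 (pow_nonneg hS0.le 3)
      _ = S^3 := by ring
  nlinarith [h1, h34, pow_pos hS0 3]

lemma aux_num {S B : ℝ} (hS0 : 0 < S) (hSl2 : S ≤ Real.log 2) (hS1 : S < 1)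
    (hBlb : S - S^2/2 ≤ B) :
    (S^2 - S) * Real.log 2 + S * Real.exp (-1) ≤ B * (1 - S) := by
  have hl2a := Real.log_two_gt_d9
  have hl2b := Real.log_two_lt_d9
  have hexp1 : Real.exp (-1) < 0.368 := by
    have h9 := Real.exp_one_gt_d9
    rw [Real.exp_neg]
    rw [inv_lt_comm₀ (Real.exp_pos 1) (by norm_num)]
    calc (0.368 : ℝ)⁻¹ < 2.7182818283 := by norm_num
      _ < Real.exp 1 := h9
  have key : (S^2 - S) * Real.log 2 + S * 0.368 ≤ (S - S^2/2) * (1 - S) := by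
    nlinarith [sq_nonneg (S - Real.log 2), mul_pos hS0 hS0, hS0.le,
      mul_lt_mul_of_pos_left hl2b (show (0:ℝ) < Real.log 2 by linarith),
      mul_le_mul_of_nonneg_left hSl2 hS0.le]
  have hh2 : (S - S^2/2) * (1 - S) ≤ B * (1 - S) :=
    mul_le_mul_of_nonneg_right hBlb (by linarith)
  nlinarith [mul_lt_mul_of_pos_left hexp1 hS0]

theorem statement_9 (n : ℕ) (hn : 0 < n) (v : Fin n → ℝ)
    (h : ∑ i, Real.log (1 + Real.exp (-(v i))) < Real.log 2) :
    0 < -Real.log (Real.exp (∑ i, Real.log (1 + Real.exp (-(v i)))) - 1) ∧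
    -Real.log (Real.exp (∑ i, Real.log (1 + Real.exp (-(v i)))) - 1) ≤
      (∑ i, v i / (1 + Real.exp (v i))) /
        (1 - Real.exp (-(∑ i, Real.log (1 + Real.exp (-(v i)))))) ∧
    (∑ i, v i / (1 + Real.exp (v i))) /
        (1 - Real.exp (-(∑ i, Real.log (1 + Real.exp (-(v i)))))) ≤
      -Real.log (Real.exp (∑ i, Real.log (1 + Real.exp (-(v i)))) - 1) +
        2 * Real.log n + 1 := by
  haveI : Nonempty (Fin n) := Fin.pos_iff_nonempty.mp hn
  have hn' : (0:ℝ) < n := by exact_mod_cast hn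
  obtain ⟨S, hSdef⟩ : ∃ x : ℝ, x = ∑ i, Real.log (1 + Real.exp (-(v i))) := ⟨_, rfl⟩
  rw [← hSdef] at h ⊢
  have hpos : ∀ i : Fin n, (0:ℝ) < 1 + Real.exp (-(v i)) := fun i => by positivity
  have haipos : ∀ i : Fin n, 0 < Real.log (1 + Real.exp (-(v i))) := fun i =>
    Real.log_pos (by nlinarith [Real.exp_pos (-(v i))])
  have hS0 : 0 < S := by rw [hSdef]; exact Finset.sum_pos (fun i _ => haipos i) Finset.univ_nonempty
  have hl2a := Real.log_two_gt_d9
  have hl2b := Real.log_two_lt_d9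
  have hS1 : S < 1 := by linarith
  -- b i
  obtain ⟨b, hbdef⟩ : ∃ b : Fin n → ℝ, b = fun i => (1 + Real.exp (v i))⁻¹ := ⟨_, rfl⟩
  have hbden : ∀ i, (0:ℝ) < 1 + Real.exp (v i) := fun i => by positivity
  have hb0 : ∀ i, 0 < b i := fun i => by
    simp only [hbdef]; exact inv_pos.2 (hbden i)
  have hb1 : ∀ i, b i < 1 := fun i => by
    simp only [hbdef]
    rw [inv_lt_one_iff₀]
    right
    nlinarith [Real.exp_pos (v i)]
  have hexp_a : ∀ i, Real.exp (-(Real.log (1 + Real.exp (-(v i))))) = 1 - b i := by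
    intro i
    rw [Real.exp_neg, Real.exp_log (hpos i)]
    simp only [hbdef]
    have he : Real.exp (-(v i)) = (Real.exp (v i))⁻¹ := Real.exp_neg _
    rw [he]
    have h1 : Real.exp (v i) ≠ 0 := (Real.exp_pos _).ne'
    have h2 : 1 + Real.exp (v i) ≠ 0 := (hbden i).ne'
    field_simp
    ring
  have hE : Real.exp (-S) = ∏ i, (1 - b i) := by
    have hneg : -S = ∑ i, -(Real.log (1 + Real.exp (-(v i)))) := by
      rw [hSdef, ← Finset.sum_neg_distrib]
    rw [hneg, Real.exp_sum]
    exact Finset.prod_congr rfl fun i _ => hexp_a i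
  have hE0 : 0 < Real.exp (-S) := Real.exp_pos _
  have hEhalf : (1:ℝ)/2 < Real.exp (-S) := by
    have hlt : Real.exp (-Real.log 2) < Real.exp (-S) := Real.exp_lt_exp.2 (by linarith)
    rwa [Real.exp_neg, Real.exp_log (by norm_num : (0:ℝ) < 2), ← one_div] at hlt
  obtain ⟨B, hBdef⟩ : ∃ x : ℝ, x = 1 - Real.exp (-S) := ⟨_, rfl⟩
  rw [← hBdef]
  have hB0 : 0 < B := by
    have : Real.exp (-S) < 1 := Real.exp_lt_one_iff.2 (by linarith)
    simp only [hBdef]; linarith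
  have hBhalf : B < 1/2 := by simp only [hBdef]; linarith
  have hB1 : B < 1 := by linarith
  have hbB : ∀ i, b i ≤ B := by
    intro i
    have hsplit : ∏ j, (1 - b j) = (1 - b i) * ∏ j ∈ Finset.univ.erase i, (1 - b j) :=
      (Finset.mul_prod_erase Finset.univ _ (Finset.mem_univ i)).symm
    have hle1 : ∏ j ∈ Finset.univ.erase i, (1 - b j) ≤ 1 :=
      Finset.prod_le_one (fun j _ => by linarith [hb1 j]) (fun j _ => by linarith [hb0 j])
    have hge0 : (0:ℝ) ≤ ∏ j ∈ Finset.univ.erase i, (1 - b j) :=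
      Finset.prod_nonneg fun j _ => by linarith [hb1 j]
    have : Real.exp (-S) ≤ 1 - b i := by
      rw [hE, hsplit]
      nlinarith [hb1 i]
    simp only [hBdef]; linarith
  obtain ⟨T, hTdef⟩ : ∃ x : ℝ, x = ∑ i, b i := ⟨_, rfl⟩
  have hT0 : 0 < T := by rw [hTdef]; exact Finset.sum_pos (fun i _ => hb0 i) Finset.univ_nonempty
  have hBT : B ≤ T := by
    have hw := aux_weier Finset.univ b (fun i _ => (hb0 i).le) (fun i _ => (hb1 i).le)
    rw [← hE] at hw
    simp only [hBdef, hTdef]; linarith [hw]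
  have hTS : T ≤ S := by
    have hprod : ∏ i, (1 - b i) ≤ ∏ i, Real.exp (-(b i)) :=
      Finset.prod_le_prod (fun i _ => by linarith [hb1 i])
        (fun i _ => Real.one_sub_le_exp_neg (b i))
    rw [← Real.exp_sum] at hprod
    have hnegT : (∑ x : Fin n, -(b x)) = -T := by
      rw [hTdef, Finset.sum_neg_distrib]
    rw [hnegT, ← hE] at hprod
    have := Real.exp_le_exp.1 hprod
    linarith
  have hBS : B ≤ S := le_trans hBT hTS
  have h1b : ∀ i, 1 - b i = Real.exp (v i) * b i := by
    intro i
    simp only [hbdef]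
    have h2 : 1 + Real.exp (v i) ≠ 0 := (hbden i).ne'
    field_simp
    ring
  have hvi : ∀ i, v i = Real.log (1 - b i) - Real.log (b i) := by
    intro i
    rw [h1b i, Real.log_mul (Real.exp_pos _).ne' (hb0 i).ne', Real.log_exp]
    ring
  have hlog1B : Real.log (1 - B) = -S := by
    simp only [hBdef, sub_sub_cancel]
    exact Real.log_exp _
  have hesb : Real.exp S - 1 = B * Real.exp S := by
    have hmul : Real.exp (-S) * Real.exp S = 1 := by
      rw [← Real.exp_add]; simp
    simp only [hBdef]; nlinarith [hmul]
  have hα : Real.log (Real.exp S - 1) = Real.log B + S := by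
    rw [hesb, Real.log_mul hB0.ne' (Real.exp_pos S).ne', Real.log_exp]
  -- alpha positivity
  have hBE : B < Real.exp (-S) := by simp only [hBdef]; linarith
  have hαpos : 0 < -Real.log B - S := by
    have := Real.log_lt_log hB0 hBE
    rw [Real.log_exp] at this
    linarith
  -- numerator rewrite
  have hNum : (∑ i, v i / (1 + Real.exp (v i))) = ∑ i, b i * v i := by
    refine Finset.sum_congr rfl fun i _ => ?_
    simp only [hbdef]
    rw [div_eq_inv_mul]
  have hlogB0 : Real.log B ≤ 0 := Real.log_nonpos hB0.le hB1.le
  have hlogn0 : 0 ≤ Real.log n := Real.log_nonneg (by exact_mod_cast hn)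
  -- lower bound on numerator
  have hviα : ∀ i, -Real.log B - S ≤ v i := by
    intro i
    rw [hvi i]
    have h1 : Real.log (1 - B) ≤ Real.log (1 - b i) :=
      Real.log_le_log (by linarith) (by linarith [hbB i])
    have h2 : Real.log (b i) ≤ Real.log B := Real.log_le_log (hb0 i) (hbB i)
    linarith [hlog1B]
  have hNlow : B * (-Real.log B - S) ≤ ∑ i, b i * v i := by
    have step1 : ∑ i, b i * (-Real.log B - S) ≤ ∑ i, b i * v i :=
      Finset.sum_le_sum fun i _ =>
        mul_le_mul_of_nonneg_left (hviα i) (hb0 i).le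
    rw [← Finset.sum_mul, ← hTdef] at step1
    have h2 : B * (-Real.log B - S) ≤ T * (-Real.log B - S) :=
      mul_le_mul_of_nonneg_right hBT hαpos.le
    linarith
  -- upper bound chain
  have hA : ∑ i, b i * v i ≤ ∑ i, b i * (-Real.log (b i)) := by
    refine Finset.sum_le_sum fun i _ => ?_
    rw [hvi i, mul_sub, mul_neg]
    have hlb : Real.log (1 - b i) ≤ 0 :=
      Real.log_nonpos (by linarith [hb1 i]) (by linarith [hb0 i])
    have h3 : b i * Real.log (1 - b i) ≤ b i * 0 :=
      mul_le_mul_of_nonneg_left hlb (hb0 i).le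
    rw [mul_zero] at h3
    linarith
  have hBstep : ∑ i, b i * (-Real.log (b i)) ≤ T * (Real.log n - Real.log T) := by
    have key : ∀ i : Fin n, b i * (-Real.log (b i)) ≤
        b i * (Real.log n - Real.log T) + (T / n - b i) := by
      intro i
      have hbi := hb0 i
      have hx : (0:ℝ) < T / (n * b i) := by positivity
      have hlog := Real.log_le_sub_one_of_pos hx
      have hlogdiv : Real.log (T / (n * b i)) =
          Real.log T - (Real.log n + Real.log (b i)) := by
        rw [Real.log_div hT0.ne' (by positivity), Real.log_mul (by positivity) hbi.ne']
      have h2 : b i * (T / (n * b i)) = T / n := by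
        field_simp
      have h1 : b i * Real.log (T / (n * b i)) ≤ b i * (T / (n * b i) - 1) :=
        mul_le_mul_of_nonneg_left hlog hbi.le
      rw [mul_sub, h2] at h1
      rw [hlogdiv] at h1
      nlinarith [h1]
    calc ∑ i, b i * (-Real.log (b i))
        ≤ ∑ i, (b i * (Real.log n - Real.log T) + (T / n - b i)) :=
          Finset.sum_le_sum fun i _ => key i
      _ = T * (Real.log n - Real.log T) := by
          rw [Finset.sum_add_distrib, ← Finset.sum_mul, ← hTdef, Finset.sum_sub_distrib,
            Finset.sum_const, Finset.card_univ, Fintype.card_fin, ← hTdef]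
          have : (n : ℝ) ≠ 0 := hn'.ne'
          field_simp
          rw [nsmul_eq_mul, mul_div_assoc', mul_div_cancel_left₀ T this]
          ring
  have hmain : ∑ i, b i * v i ≤ T * (Real.log n - Real.log T) :=
    le_trans hA hBstep
  -- final goals
  rw [hα, hNum]
  refine ⟨by linarith, ?_, ?_⟩
  · rw [le_div_iff₀ hB0]
    linarith [hNlow]
  · rw [div_le_iff₀ hB0]
    -- suffices: T*(log n - log T) ≤ (-(log B + S) + 2 log n + 1) * B
    rcases Nat.lt_or_ge n 2 with hn2 | hn2
    · -- n = 1
      have hne : n = 1 := by omega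
      subst hne
      have hTB : T = B := by
        have hT1 : T = b 0 := by rw [hTdef]; exact Fin.sum_univ_one _
        have hE1 : Real.exp (-S) = 1 - b 0 := by rw [hE]; exact Fin.prod_univ_one _
        rw [hT1]; simp only [hBdef, hE1]; ring
      have hlog1 : Real.log ((1:ℕ):ℝ) = 0 := by norm_num
      rw [hlog1] at hmain ⊢
      rw [hTB] at hmain
      have hpos1S : 0 < B * (1 - S) := mul_pos hB0 (by linarith)
      nlinarith [hmain, hpos1S]
    · -- n ≥ 2
      have hlogn2 : Real.log 2 ≤ Real.log n :=
        Real.log_le_log (by norm_num) (by exact_mod_cast hn2)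
      have hquad : Real.exp (-S) ≤ 1 - S + S^2/2 := aux_quad hS0 hS1.le
      have hSB2 : S - B ≤ S^2/2 := by simp only [hBdef]; linarith
      have hBlb : S - S^2/2 ≤ B := by simp only [hBdef]; linarith
      have hB2 : S/2 ≤ B := by
        have hss : S * S ≤ S * 1 := mul_le_mul_of_nonneg_left hS1.le hS0.le
        rw [mul_one] at hss
        have : S^2 ≤ S := by nlinarith [hss]
        linarith [hBlb]
      have hlogB : Real.log S - Real.log 2 ≤ Real.log B := by
        have h1 : Real.log (S/2) ≤ Real.log B :=
          Real.log_le_log (by positivity) hB2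
        rwa [Real.log_div hS0.ne' (by norm_num)] at h1
      have hmul1 : (S - B) * (-Real.log B) ≤ (S^2/2) * (Real.log 2 - Real.log S) := by
        apply mul_le_mul hSB2 (by linarith) (by linarith) (by positivity)
      have hloglem : Real.log 2 - Real.log S ≤ (2/S) * Real.exp (-1) := by
        have h1 := aux_log_le (show (0:ℝ) < 2/S by positivity)
        rwa [Real.log_div (by norm_num) hS0.ne'] at h1
      have hmul2 : (S^2/2) * (Real.log 2 - Real.log S) ≤ S * Real.exp (-1) := by
        have h1 : (S^2/2) * (Real.log 2 - Real.log S) ≤ (S^2/2) * ((2/S) * Real.exp (-1)) :=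
          mul_le_mul_of_nonneg_left hloglem (by positivity)
        have h2 : (S^2/2) * ((2/S) * Real.exp (-1)) = S * Real.exp (-1) := by
          field_simp
        linarith
      have hmul3 : (S - 2*B) * Real.log n ≤ (S^2 - S) * Real.log 2 := by
        have hs2b : S - 2*B ≤ S^2 - S := by linarith
        have hss : S^2 - S ≤ 0 := by nlinarith
        have h1 : (S - 2*B) * Real.log n ≤ (S^2 - S) * Real.log n :=
          mul_le_mul_of_nonneg_right hs2b hlogn0
        have h2 : (S^2 - S) * Real.log n ≤ (S^2 - S) * Real.log 2 := by
          apply mul_le_mul_of_nonpos_left hlogn2 hss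
        linarith
      have hSl2 : S ≤ Real.log 2 := le_of_lt h
      have hexpneg0 : 0 < Real.exp (-1) := Real.exp_pos _
      have hnum : (S^2 - S) * Real.log 2 + S * Real.exp (-1) ≤ B * (1 - S) :=
        aux_num hS0 hSl2 hS1 hBlb
      -- combine
      have hchainC : T * (Real.log n - Real.log T) ≤ S * (Real.log n - Real.log B) := by
        have h1 : Real.log B ≤ Real.log T := Real.log_le_log hB0 hBT
        have h2 : T * (Real.log n - Real.log T) ≤ T * (Real.log n - Real.log B) :=
          mul_le_mul_of_nonneg_left (by linarith) hT0.le
        have h3 : T * (Real.log n - Real.log B) ≤ S * (Real.log n - Real.log B) :=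
          mul_le_mul_of_nonneg_right hTS (by linarith)
        linarith
      have hfin : S * (Real.log n - Real.log B) ≤
          (-(Real.log B + S) + 2 * Real.log n + 1) * B := by
        nlinarith [hmul1, hmul2, hmul3, hnum]
      linarith [hmain, hchainC, hfin]
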